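/- Subadditivity of von Neumann entropy: for any bipartite density matrix σ_{AB} on ℂ^{d_A} ⊗ ℂ^{d_B}, S(AB) ≤ S(A) + S(B), where S(A) and S(B) are entropies of the reduced states. -/

import Mathlib

open Matrix
open scoped Classical ComplexOrder

/-- The von Neumann entropy `S(σ) = −Tr(σ log σ)`, computed via the eigenvalues
of a Hermitian matrix (junk value `0` on non-Hermitian matrices). -/
noncomputable def vonNeumannEntropy {ι : Type*} [Fintype ι] [DecidableEq ι] (σ : Matrix ι ι ℂ) : ℝ :=
  if h : σ.IsHermitian then -∑ i, h.eigenvalues i * Real.log (h.eigenvalues i) else 0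

/-- Partial trace over the second tensor factor: `σ_A = Tr_B σ_{AB}`. -/
noncomputable def ptraceB {dA dB : ℕ}
    (σ : Matrix (Fin dA × Fin dB) (Fin dA × Fin dB) ℂ) :
    Matrix (Fin dA) (Fin dA) ℂ :=
  Matrix.of fun i j => ∑ k : Fin dB, σ (i, k) (j, k)

/-- Partial trace over the first tensor factor: `σ_B = Tr_A σ_{AB}`. -/
noncomputable def ptraceA {dA dB : ℕ}
    (σ : Matrix (Fin dA × Fin dB) (Fin dA × Fin dB) ℂ) :
    Matrix (Fin dB) (Fin dB) ℂ :=
  Matrix.of fun i j => ∑ k : Fin dA, σ (k, i) (k, j)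

namespace Subadd

lemma klein {w p q : ℝ} (hw : 0 ≤ w) (hp : 0 ≤ p) (hq : 0 ≤ q)
    (hz : q = 0 → w * p = 0) :
    w * p - w * q ≤ w * p * (Real.log p - Real.log q) := by
  rcases eq_or_lt_of_le hp with hp0 | hp0
  · simp only [← hp0, mul_zero, zero_mul, zero_sub, zero_mul]; nlinarith
  rcases eq_or_lt_of_le hw with hw0 | hw0
  · simp [← hw0]
  rcases eq_or_lt_of_le hq with hq0 | hq0
  · exfalso; have := hz hq0.symm; nlinarith
  · have h1 : Real.log q - Real.log p ≤ q / p - 1 := by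
      have := Real.log_le_sub_one_of_pos (show (0:ℝ) < q / p by positivity)
      rwa [Real.log_div (ne_of_gt hq0) (ne_of_gt hp0)] at this
    have h2 : w * p * (Real.log q - Real.log p) ≤ w * p * (q / p - 1) :=
      mul_le_mul_of_nonneg_left h1 (by positivity)
    have h3 : w * p * (q / p - 1) = w * q - w * p := by field_simp
    nlinarith

lemma trace_eq {n : Type*} [Fintype n] [DecidableEq n] {A : Matrix n n ℂ} (hA : A.IsHermitian) :
    A.trace = ∑ i, (hA.eigenvalues i : ℂ) := by
  conv_lhs => rw [hA.spectral_theorem, Unitary.conjStarAlgAut_apply]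
  rw [Matrix.trace_mul_cycle,
    (Matrix.mem_unitaryGroup_iff').mp (hA.eigenvectorUnitary).2, one_mul, Matrix.trace_diagonal]
  rfl

lemma complete {d : ℕ} (y : OrthonormalBasis (Fin d) ℂ (EuclideanSpace ℂ (Fin d))) (l l' : Fin d) :
    ∑ j, y j l * (starRingEnd ℂ) (y j l') = if l = l' then 1 else 0 := by
  have h2 : ∀ j : Fin d, (inner ℂ (y j) (EuclideanSpace.single l' (1:ℂ)) : ℂ)
      = (starRingEnd ℂ) (y j l') := by
    intro j; rw [← inner_conj_symm, EuclideanSpace.inner_single_left]; simp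
  have h := y.sum_inner_mul_inner (EuclideanSpace.single l (1:ℂ)) (EuclideanSpace.single l' (1:ℂ))
  simp only [EuclideanSpace.inner_single_left, h2, _root_.map_one, one_mul] at h
  rw [h, EuclideanSpace.single_apply]

lemma parseval {ι E : Type*} [Fintype ι] [NormedAddCommGroup E] [InnerProductSpace ℂ E]
    (b : OrthonormalBasis ι ℂ E) (z : E) :
    ∑ m, ‖(inner ℂ (b m) z : ℂ)‖ ^ 2 = ‖z‖ ^ 2 := by
  have h := b.sum_inner_mul_inner z z
  have h2 : ∀ m, (inner ℂ z (b m) : ℂ) * inner ℂ (b m) z = ((‖(inner ℂ (b m) z : ℂ)‖ ^ 2 : ℝ) : ℂ) := by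
    intro m
    rw [← inner_conj_symm, RCLike.conj_mul]
    norm_cast
  simp only [h2] at h
  have := congrArg Complex.re h
  simp only [Complex.re_sum, Complex.ofReal_re] at this
  rw [this]
  exact inner_self_eq_norm_sq (𝕜 := ℂ) z

lemma sum_quadForm_trace {d : ℕ} (N : Matrix (Fin d) (Fin d) ℂ)
    (y : OrthonormalBasis (Fin d) ℂ (EuclideanSpace ℂ (Fin d))) :
    ∑ j, star (y j : Fin d → ℂ) ⬝ᵥ N *ᵥ (y j : Fin d → ℂ) = N.trace := by
  have key : ∀ l l' : Fin d, ∑ j, star (y j l) * y j l' = if l' = l then 1 else 0 := by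
    intro l l'
    rw [← complete y l' l]
    exact Finset.sum_congr rfl fun j _ => by rw [Complex.star_def]; ring
  simp only [dotProduct, mulVec, Pi.star_apply, Finset.mul_sum, dotProduct]
  rw [Finset.sum_comm]
  simp only [Matrix.trace, diag]
  refine Finset.sum_congr rfl fun l _ => ?_
  rw [Finset.sum_comm]
  have step : ∀ l' : Fin d, ∑ j, star (y j l) * (N l l' * y j l')
      = N l l' * (if l' = l then 1 else 0) := by
    intro l'
    rw [← key l l', Finset.mul_sum]
    exact Finset.sum_congr rfl fun j _ => by ring
  simp only [step, mul_ite, mul_one, mul_zero]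
  simp

lemma quad_prod_B {dA dB : ℕ} (σ : Matrix (Fin dA × Fin dB) (Fin dA × Fin dB) ℂ)
    (x : Fin dA → ℂ) (y : Fin dB → ℂ) :
    star (fun kl : Fin dA × Fin dB => x kl.1 * y kl.2) ⬝ᵥ σ *ᵥ (fun kl : Fin dA × Fin dB => x kl.1 * y kl.2)
    = ∑ k, ∑ k', star (x k) * x k' * (star y ⬝ᵥ (Matrix.of fun l l' => σ (k,l) (k',l')) *ᵥ y) := by
  simp only [dotProduct, mulVec, Fintype.sum_prod_type, Pi.star_apply, Finset.mul_sum,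
    Matrix.of_apply, Finset.sum_mul]
  refine Finset.sum_congr rfl fun k _ => ?_
  rw [Finset.sum_comm]
  refine Finset.sum_congr rfl fun k' _ => Finset.sum_congr rfl fun l _ =>
    Finset.sum_congr rfl fun l' _ => ?_
  simp only [star_mul']
  ring

lemma quad_prod_A {dA dB : ℕ} (σ : Matrix (Fin dA × Fin dB) (Fin dA × Fin dB) ℂ)
    (x : Fin dA → ℂ) (y : Fin dB → ℂ) :
    star (fun kl : Fin dA × Fin dB => x kl.1 * y kl.2) ⬝ᵥ σ *ᵥ (fun kl : Fin dA × Fin dB => x kl.1 * y kl.2)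
    = ∑ l, ∑ l', star (y l) * y l' * (star x ⬝ᵥ (Matrix.of fun k k' => σ (k,l) (k',l')) *ᵥ x) := by
  simp only [dotProduct, mulVec, Fintype.sum_prod_type, Pi.star_apply, Finset.mul_sum,
    Matrix.of_apply, Finset.sum_mul]
  rw [Finset.sum_comm]
  refine Finset.sum_congr rfl fun l _ => ?_
  refine Eq.trans (Finset.sum_congr rfl fun k _ => Finset.sum_comm) ?_
  rw [Finset.sum_comm]
  refine Finset.sum_congr rfl fun l' _ => Finset.sum_congr rfl fun k _ =>
    Finset.sum_congr rfl fun k' _ => ?_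
  simp only [star_mul']
  ring

lemma quad_sum {n κ : Type*} [Fintype n] [Fintype κ] (M : κ → Matrix n n ℂ) (z : n → ℂ) :
    star z ⬝ᵥ (∑ k, M k) *ᵥ z = ∑ k, star z ⬝ᵥ (M k) *ᵥ z := by
  have h : (∑ k, M k) *ᵥ z = ∑ k, (M k) *ᵥ z := by
    ext i
    simp only [mulVec, dotProduct, Matrix.sum_apply, Finset.sum_mul, Finset.sum_apply]
    rw [Finset.sum_comm]
  rw [h]
  simp only [dotProduct, Finset.sum_apply, Finset.mul_sum]
  rw [Finset.sum_comm]

lemma ptraceB_eq_sum {dA dB : ℕ} (σ : Matrix (Fin dA × Fin dB) (Fin dA × Fin dB) ℂ) :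
    ptraceB σ = ∑ k : Fin dB, Matrix.of fun i j => σ (i,k) (j,k) := by
  ext i j; simp [ptraceB, Matrix.sum_apply]

lemma ptraceA_eq_sum {dA dB : ℕ} (σ : Matrix (Fin dA × Fin dB) (Fin dA × Fin dB) ℂ) :
    ptraceA σ = ∑ k : Fin dA, Matrix.of fun i j => σ (k,i) (k,j) := by
  ext i j; simp [ptraceA, Matrix.sum_apply]

lemma ptraceB_posSemidef {dA dB : ℕ} {σ : Matrix (Fin dA × Fin dB) (Fin dA × Fin dB) ℂ}
    (hσ : σ.PosSemidef) : (ptraceB σ).PosSemidef := by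
  refine Matrix.PosSemidef.of_dotProduct_mulVec_nonneg ?_ ?_
  · ext i j
    simp only [conjTranspose_apply, ptraceB, Matrix.of_apply, star_sum]
    exact Finset.sum_congr rfl fun k _ => hσ.1.apply (i,k) (j,k)
  · intro z
    have hk : ∀ k : Fin dB, star z ⬝ᵥ (Matrix.of fun i j => σ (i,k) (j,k)) *ᵥ z
        = star (fun il : Fin dA × Fin dB => z il.1 * (if il.2 = k then (1:ℂ) else 0))
            ⬝ᵥ σ *ᵥ (fun il : Fin dA × Fin dB => z il.1 * (if il.2 = k then (1:ℂ) else 0)) := by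
      intro k
      rw [quad_prod_B σ z (fun l => if l = k then (1:ℂ) else 0)]
      simp only [dotProduct, mulVec, Pi.star_apply, Matrix.of_apply,
        apply_ite (star : ℂ → ℂ), star_one, star_zero, ite_mul, one_mul, zero_mul,
        mul_ite, mul_one, mul_zero, Finset.sum_ite_eq', Finset.mem_univ, if_true]
      simp only [dotProduct, mulVec, Pi.star_apply, Matrix.of_apply, Finset.mul_sum]
      refine Finset.sum_congr rfl fun i _ => Finset.sum_congr rfl fun j _ => by ring
    rw [ptraceB_eq_sum, quad_sum]
    exact Finset.sum_nonneg fun k _ => by rw [hk k]; exact hσ.dotProduct_mulVec_nonneg _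

lemma ptraceA_posSemidef {dA dB : ℕ} {σ : Matrix (Fin dA × Fin dB) (Fin dA × Fin dB) ℂ}
    (hσ : σ.PosSemidef) : (ptraceA σ).PosSemidef := by
  refine Matrix.PosSemidef.of_dotProduct_mulVec_nonneg ?_ ?_
  · ext i j
    simp only [conjTranspose_apply, ptraceA, Matrix.of_apply, star_sum]
    exact Finset.sum_congr rfl fun k _ => hσ.1.apply (k,i) (k,j)
  · intro z
    have hk : ∀ k : Fin dA, star z ⬝ᵥ (Matrix.of fun i j => σ (k,i) (k,j)) *ᵥ z
        = star (fun il : Fin dA × Fin dB => (if il.1 = k then (1:ℂ) else 0) * z il.2)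
            ⬝ᵥ σ *ᵥ (fun il : Fin dA × Fin dB => (if il.1 = k then (1:ℂ) else 0) * z il.2) := by
      intro k
      rw [quad_prod_A σ (fun l => if l = k then (1:ℂ) else 0) z]
      simp only [dotProduct, mulVec, Pi.star_apply, Matrix.of_apply,
        apply_ite (star : ℂ → ℂ), star_one, star_zero, ite_mul, one_mul, zero_mul,
        mul_ite, mul_one, mul_zero, Finset.sum_ite_eq', Finset.mem_univ, if_true]
      simp only [dotProduct, mulVec, Pi.star_apply, Matrix.of_apply, Finset.mul_sum]
      refine Finset.sum_congr rfl fun i _ => Finset.sum_congr rfl fun j _ => by ring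
    rw [ptraceA_eq_sum, quad_sum]
    exact Finset.sum_nonneg fun k _ => by rw [hk k]; exact hσ.dotProduct_mulVec_nonneg _

lemma quadForm_spectral {n : Type*} [Fintype n] [DecidableEq n] {A : Matrix n n ℂ}
    (hA : A.IsHermitian) (z : EuclideanSpace ℂ n) :
    star (z : n → ℂ) ⬝ᵥ A *ᵥ (z : n → ℂ)
      = ((∑ m, hA.eigenvalues m * ‖(inner ℂ (hA.eigenvectorBasis m) z : ℂ)‖ ^ 2 : ℝ) : ℂ) := by
  have hc : ∀ m, (star (hA.eigenvectorUnitary : Matrix n n ℂ) *ᵥ (z : n → ℂ)) m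
      = (inner ℂ (hA.eigenvectorBasis m) z : ℂ) := by
    intro m
    simp [mulVec, dotProduct, PiLp.inner_apply, Matrix.star_apply,
      Matrix.IsHermitian.eigenvectorUnitary_apply]
    exact Finset.sum_congr rfl fun i _ => mul_comm _ _
  have key : ∀ (c : ℂ) (p : ℝ), (starRingEnd ℂ) c * ((p:ℂ) * c) = ((p * ‖c‖^2 : ℝ) : ℂ) := by
    intro c p
    calc (starRingEnd ℂ) c * ((p:ℂ) * c) = (p:ℂ) * (c * (starRingEnd ℂ) c) := by ring
    _ = (p:ℂ) * ((Complex.normSq c : ℝ) : ℂ) := by rw [Complex.mul_conj]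
    _ = ((p * ‖c‖^2 : ℝ) : ℂ) := by
        rw [Complex.normSq_eq_norm_sq]; push_cast; ring
  conv_lhs => rw [hA.spectral_theorem, Unitary.conjStarAlgAut_apply]
  rw [← mulVec_mulVec, ← mulVec_mulVec, dotProduct_mulVec]
  have hsz : star (z : n → ℂ) ᵥ* (hA.eigenvectorUnitary : Matrix n n ℂ)
      = star ((star (hA.eigenvectorUnitary : Matrix n n ℂ)) *ᵥ (z : n → ℂ)) := by
    rw [star_mulVec, Matrix.star_eq_conjTranspose, conjTranspose_conjTranspose]
  rw [hsz]
  set c := (star (hA.eigenvectorUnitary : Matrix n n ℂ)) *ᵥ (z : n → ℂ) with hcdef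
  have hdiag : ∀ i, (diagonal (RCLike.ofReal ∘ hA.eigenvalues) *ᵥ c) i
      = (hA.eigenvalues i : ℂ) * c i := by
    intro i; simp [mulVec, diagonal_dotProduct]
  have hthis : star c ⬝ᵥ (diagonal (RCLike.ofReal ∘ hA.eigenvalues) *ᵥ c)
      = ∑ m, (starRingEnd ℂ) (c m) * ((hA.eigenvalues m : ℂ) * c m) := by
    simp only [dotProduct, Pi.star_apply, hdiag]
    rfl
  rw [hthis]
  push_cast
  refine Finset.sum_congr rfl fun m _ => ?_
  rw [key (c m) (hA.eigenvalues m), hc m]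
  push_cast
  ring

lemma sum_quad_prod_B {dA dB : ℕ} (σ : Matrix (Fin dA × Fin dB) (Fin dA × Fin dB) ℂ)
    (x : Fin dA → ℂ) (y : OrthonormalBasis (Fin dB) ℂ (EuclideanSpace ℂ (Fin dB))) :
    ∑ j, star (fun kl : Fin dA × Fin dB => x kl.1 * y j kl.2)
        ⬝ᵥ σ *ᵥ (fun kl : Fin dA × Fin dB => x kl.1 * y j kl.2)
      = star x ⬝ᵥ (ptraceB σ) *ᵥ x := by
  simp only [quad_prod_B]
  rw [Finset.sum_comm]
  have hkk : ∀ k, (∑ j, ∑ k', star (x k) * x k'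
        * (star (y j : Fin dB → ℂ) ⬝ᵥ (Matrix.of fun l l' => σ (k,l) (k',l')) *ᵥ (y j : Fin dB → ℂ)))
      = ∑ k', star (x k) * x k' * (ptraceB σ k k') := by
    intro k
    rw [Finset.sum_comm]
    refine Finset.sum_congr rfl fun k' _ => ?_
    rw [← Finset.mul_sum, sum_quadForm_trace _ y]
    congr 1
  simp only [hkk]
  simp only [dotProduct, mulVec, Pi.star_apply, Finset.mul_sum]
  exact Finset.sum_congr rfl fun k _ => Finset.sum_congr rfl fun k' _ => by ring

lemma sum_quad_prod_A {dA dB : ℕ} (σ : Matrix (Fin dA × Fin dB) (Fin dA × Fin dB) ℂ)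
    (y : Fin dB → ℂ) (x : OrthonormalBasis (Fin dA) ℂ (EuclideanSpace ℂ (Fin dA))) :
    ∑ i, star (fun kl : Fin dA × Fin dB => x i kl.1 * y kl.2)
        ⬝ᵥ σ *ᵥ (fun kl : Fin dA × Fin dB => x i kl.1 * y kl.2)
      = star y ⬝ᵥ (ptraceA σ) *ᵥ y := by
  simp only [quad_prod_A]
  rw [Finset.sum_comm]
  have hll : ∀ l, (∑ i, ∑ l', star (y l) * y l'
        * (star (x i : Fin dA → ℂ) ⬝ᵥ (Matrix.of fun k k' => σ (k,l) (k',l')) *ᵥ (x i : Fin dA → ℂ)))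
      = ∑ l', star (y l) * y l' * (ptraceA σ l l') := by
    intro l
    rw [Finset.sum_comm]
    refine Finset.sum_congr rfl fun l' _ => ?_
    rw [← Finset.mul_sum, sum_quadForm_trace _ x]
    congr 1
  simp only [hll]
  simp only [dotProduct, mulVec, Pi.star_apply, Finset.mul_sum]
  exact Finset.sum_congr rfl fun l _ => Finset.sum_congr rfl fun l' _ => by ring

end Subadd
/-- Subadditivity of the von Neumann entropy: `S(AB) ≤ S(A) + S(B)`. -/
theorem stmt_14 (dA dB : ℕ)
    (σ : Matrix (Fin dA × Fin dB) (Fin dA × Fin dB) ℂ)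
    (hσ : σ.PosSemidef) (htr : σ.trace = 1) :
    vonNeumannEntropy σ ≤ vonNeumannEntropy (ptraceB σ) + vonNeumannEntropy (ptraceA σ) := by
  rcases Nat.eq_zero_or_pos dA with hdA | hdA
  · exfalso; subst hdA
    have h0 : σ.trace = 0 := by simp [Matrix.trace]
    rw [h0] at htr; exact zero_ne_one htr
  rcases Nat.eq_zero_or_pos dB with hdB | hdB
  · exfalso; subst hdB
    have h0 : σ.trace = 0 := by simp [Matrix.trace]
    rw [h0] at htr; exact zero_ne_one htr
  have h : σ.IsHermitian := hσ.1
  have hApsd := Subadd.ptraceB_posSemidef hσ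
  have hBpsd := Subadd.ptraceA_posSemidef hσ
  have hAh : (ptraceB σ).IsHermitian := hApsd.1
  have hBh : (ptraceA σ).IsHermitian := hBpsd.1
  set p := h.eigenvalues with hpdef
  set a := hAh.eigenvalues with hadef
  set b := hBh.eigenvalues with hbdef
  -- the product family
  set v : Fin dA × Fin dB → EuclideanSpace ℂ (Fin dA × Fin dB) :=
    (fun ij => WithLp.toLp 2 (fun kl : Fin dA × Fin dB => hAh.eigenvectorBasis ij.1 kl.1 * hBh.eigenvectorBasis ij.2 kl.2)) with hvdef
  have hvpair : ∀ i j, v (i,j)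
      = fun kl : Fin dA × Fin dB => hAh.eigenvectorBasis i kl.1 * hBh.eigenvectorBasis j kl.2 := by
    intro i j; rfl
  have hvon : Orthonormal ℂ v := by
    rw [orthonormal_iff_ite]
    intro pq rs
    have hx := orthonormal_iff_ite.mp hAh.eigenvectorBasis.orthonormal pq.1 rs.1
    have hy := orthonormal_iff_ite.mp hBh.eigenvectorBasis.orthonormal pq.2 rs.2
    have hinner : (inner ℂ (v pq) (v rs) : ℂ)
        = (inner ℂ (hAh.eigenvectorBasis pq.1) (hAh.eigenvectorBasis rs.1) : ℂ)
          * (inner ℂ (hBh.eigenvectorBasis pq.2) (hBh.eigenvectorBasis rs.2) : ℂ) := by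
      simp only [PiLp.inner_apply, RCLike.inner_apply, hvdef]
      rw [Finset.sum_mul_sum, Fintype.sum_prod_type]
      refine Finset.sum_congr rfl fun k _ => Finset.sum_congr rfl fun l _ => ?_
      simp only [_root_.map_mul]
      ring
    rw [hinner, hx, hy]
    by_cases h1 : pq.1 = rs.1 <;> by_cases h2 : pq.2 = rs.2 <;>
      simp [h1, h2, Prod.ext_iff]
  haveI : Nonempty (Fin dA × Fin dB) := ⟨(⟨0,hdA⟩, ⟨0,hdB⟩)⟩
  have hcard : Fintype.card (Fin dA × Fin dB)
      = Module.finrank ℂ (EuclideanSpace ℂ (Fin dA × Fin dB)) := by simp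
  set V : OrthonormalBasis (Fin dA × Fin dB) ℂ (EuclideanSpace ℂ (Fin dA × Fin dB)) :=
    (basisOfOrthonormalOfCardEqFinrank hvon hcard).toOrthonormalBasis
      (by rwa [coe_basisOfOrthonormalOfCardEqFinrank]) with hVdef
  have hVcoe : ∀ ij, V ij = v ij := by
    intro ij
    have hcoe : ⇑V = v := by
      rw [hVdef, Module.Basis.coe_toOrthonormalBasis, coe_basisOfOrthonormalOfCardEqFinrank]
    rw [hcoe]
  -- the weights
  set w : (Fin dA × Fin dB) → Fin dA → Fin dB → ℝ :=
    (fun m i j => ‖(inner ℂ (h.eigenvectorBasis m) (v (i,j)) : ℂ)‖ ^ 2) with hwdef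
  set r : Fin dA → Fin dB → ℝ := (fun i j => ∑ m, p m * w m i j) with hrdef
  have hw0 : ∀ m i j, 0 ≤ w m i j := fun m i j => by rw [hwdef]; positivity
  have hp0 : ∀ m, 0 ≤ p m := fun m => hσ.eigenvalues_nonneg m
  have ha0 : ∀ i, 0 ≤ a i := fun i => hApsd.eigenvalues_nonneg i
  have hb0 : ∀ j, 0 ≤ b j := fun j => hBpsd.eigenvalues_nonneg j
  have hr0 : ∀ i j, 0 ≤ r i j := fun i j =>
    Finset.sum_nonneg fun m _ => mul_nonneg (hp0 m) (hw0 m i j)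
  -- eigenvalue sums
  have hsp : ∑ m, p m = 1 := by
    have ht := Subadd.trace_eq h
    rw [htr] at ht
    exact_mod_cast ht.symm
  have htrA : (ptraceB σ).trace = 1 := by
    rw [← htr]; simp [Matrix.trace, ptraceB, Matrix.diag, Fintype.sum_prod_type]
  have htrB : (ptraceA σ).trace = 1 := by
    rw [← htr]
    simp only [Matrix.trace, ptraceA, Matrix.diag, Matrix.of_apply, Fintype.sum_prod_type]
    rw [Finset.sum_comm]
  have hsa : ∑ i, a i = 1 := by
    have ht := Subadd.trace_eq hAh; rw [htrA] at ht; exact_mod_cast ht.symm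
  have hsb : ∑ j, b j = 1 := by
    have ht := Subadd.trace_eq hBh; rw [htrB] at ht; exact_mod_cast ht.symm
  -- Parseval identities
  have hwA : ∀ i j, ∑ m, w m i j = 1 := by
    intro i j
    have hpv := Subadd.parseval h.eigenvectorBasis (v (i,j))
    rw [hvon.1 (i,j)] at hpv
    simpa [hwdef] using hpv
  have hwB : ∀ m, ∑ i, ∑ j, w m i j = 1 := by
    intro m
    have hP := Subadd.parseval V (h.eigenvectorBasis m)
    rw [Fintype.sum_prod_type] at hP
    have hterm : ∀ i j, ‖(inner ℂ (V (i,j)) (h.eigenvectorBasis m) : ℂ)‖^2 = w m i j := by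
      intro i j; rw [norm_inner_symm, hVcoe]
    simp only [hterm] at hP
    rw [hP, h.eigenvectorBasis.orthonormal.1 m, one_pow]
  -- r as quadratic form
  have hrq : ∀ i j, ((r i j : ℝ) : ℂ)
      = star (v (i,j) : (Fin dA × Fin dB) → ℂ) ⬝ᵥ σ *ᵥ (v (i,j) : (Fin dA × Fin dB) → ℂ) :=
    fun i j => (Subadd.quadForm_spectral h (v (i,j))).symm
  -- unit quadratic forms of eigenvectors
  have hxa : ∀ i, star (hAh.eigenvectorBasis i : Fin dA → ℂ)
      ⬝ᵥ (ptraceB σ) *ᵥ (hAh.eigenvectorBasis i : Fin dA → ℂ) = ((a i : ℝ) : ℂ) := by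
    intro i
    have h1 : (ptraceB σ) *ᵥ (hAh.eigenvectorBasis i : Fin dA → ℂ)
        = a i • (hAh.eigenvectorBasis i : Fin dA → ℂ) := hAh.mulVec_eigenvectorBasis i
    rw [h1, dotProduct_smul]
    have hxx : star (hAh.eigenvectorBasis i : Fin dA → ℂ) ⬝ᵥ (hAh.eigenvectorBasis i : Fin dA → ℂ)
        = 1 := by
      have hii := orthonormal_iff_ite.mp hAh.eigenvectorBasis.orthonormal i i
      rw [if_pos rfl] at hii
      rw [EuclideanSpace.inner_eq_star_dotProduct] at hii
      rwa [dotProduct_comm] at hii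
    rw [hxx]
    simp
  have hyb : ∀ j, star (hBh.eigenvectorBasis j : Fin dB → ℂ)
      ⬝ᵥ (ptraceA σ) *ᵥ (hBh.eigenvectorBasis j : Fin dB → ℂ) = ((b j : ℝ) : ℂ) := by
    intro j
    have h1 : (ptraceA σ) *ᵥ (hBh.eigenvectorBasis j : Fin dB → ℂ)
        = b j • (hBh.eigenvectorBasis j : Fin dB → ℂ) := hBh.mulVec_eigenvectorBasis j
    rw [h1, dotProduct_smul]
    have hxx : star (hBh.eigenvectorBasis j : Fin dB → ℂ) ⬝ᵥ (hBh.eigenvectorBasis j : Fin dB → ℂ)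
        = 1 := by
      have hii := orthonormal_iff_ite.mp hBh.eigenvectorBasis.orthonormal j j
      rw [if_pos rfl] at hii
      rw [EuclideanSpace.inner_eq_star_dotProduct] at hii
      rwa [dotProduct_comm] at hii
    rw [hxx]
    simp
  -- marginals of r
  have hsumB : ∀ i, ∑ j, r i j = a i := by
    intro i
    have hc : ∑ j, ((r i j : ℝ) : ℂ) = ((a i : ℝ) : ℂ) := by
      calc ∑ j, ((r i j : ℝ) : ℂ)
          = ∑ j, star (v (i,j) : (Fin dA × Fin dB) → ℂ) ⬝ᵥ σ *ᵥ (v (i,j) : (Fin dA × Fin dB) → ℂ) :=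
            Finset.sum_congr rfl fun j _ => hrq i j
        _ = star (hAh.eigenvectorBasis i : Fin dA → ℂ)
              ⬝ᵥ (ptraceB σ) *ᵥ (hAh.eigenvectorBasis i : Fin dA → ℂ) := by
            rw [← Subadd.sum_quad_prod_B σ (hAh.eigenvectorBasis i : Fin dA → ℂ) hBh.eigenvectorBasis]
        _ = ((a i : ℝ) : ℂ) := hxa i
    have : ((∑ j, r i j : ℝ) : ℂ) = ((a i : ℝ) : ℂ) := by push_cast; exact hc
    exact_mod_cast this
  have hsumA : ∀ j, ∑ i, r i j = b j := by
    intro j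
    have hc : ∑ i, ((r i j : ℝ) : ℂ) = ((b j : ℝ) : ℂ) := by
      calc ∑ i, ((r i j : ℝ) : ℂ)
          = ∑ i, star (v (i,j) : (Fin dA × Fin dB) → ℂ) ⬝ᵥ σ *ᵥ (v (i,j) : (Fin dA × Fin dB) → ℂ) :=
            Finset.sum_congr rfl fun i _ => hrq i j
        _ = star (hBh.eigenvectorBasis j : Fin dB → ℂ)
              ⬝ᵥ (ptraceA σ) *ᵥ (hBh.eigenvectorBasis j : Fin dB → ℂ) := by
            rw [← Subadd.sum_quad_prod_A σ (hBh.eigenvectorBasis j : Fin dB → ℂ) hAh.eigenvectorBasis]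
        _ = ((b j : ℝ) : ℂ) := hyb j
    have : ((∑ i, r i j : ℝ) : ℂ) = ((b j : ℝ) : ℂ) := by push_cast; exact hc
    exact_mod_cast this
  -- zero propagation
  have hra : ∀ i, a i = 0 → ∀ j, r i j = 0 := by
    intro i h0 j
    have hzero : ∑ j, r i j = 0 := by rw [hsumB i, h0]
    exact (Finset.sum_eq_zero_iff_of_nonneg (fun j _ => hr0 i j)).mp hzero j (Finset.mem_univ j)
  have hrb : ∀ j, b j = 0 → ∀ i, r i j = 0 := by
    intro j h0 i
    have hzero : ∑ i, r i j = 0 := by rw [hsumA j, h0]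
    exact (Finset.sum_eq_zero_iff_of_nonneg (fun i _ => hr0 i j)).mp hzero i (Finset.mem_univ i)
  have hpw0 : ∀ i j, r i j = 0 → ∀ m, p m * w m i j = 0 := by
    intro i j h0 m
    have h0' : ∑ m, p m * w m i j = 0 := h0
    exact (Finset.sum_eq_zero_iff_of_nonneg
      (fun m _ => mul_nonneg (hp0 m) (hw0 m i j))).mp h0' m (Finset.mem_univ m)
  -- entropy rewriting
  rw [vonNeumannEntropy, vonNeumannEntropy, vonNeumannEntropy,
    dif_pos h, dif_pos hAh, dif_pos hBh]
  rw [← hpdef, ← hadef, ← hbdef]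
  -- reduce to sum inequality
  suffices hfin : ∑ i, a i * Real.log (a i) + ∑ j, b j * Real.log (b j)
      ≤ ∑ m, p m * Real.log (p m) by linarith
  -- express entropies of marginals via r
  have hT1 : ∑ i, a i * Real.log (a i) = ∑ i, ∑ j, r i j * Real.log (a i) := by
    refine Finset.sum_congr rfl fun i _ => ?_
    rw [← Finset.sum_mul, hsumB i]
  have hT2 : ∑ j, b j * Real.log (b j) = ∑ i, ∑ j, r i j * Real.log (b j) := by
    rw [Finset.sum_comm]
    refine Finset.sum_congr rfl fun j _ => ?_
    rw [← Finset.sum_mul, hsumA j]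
  have hTq : ∑ i, ∑ j, r i j * Real.log (a i * b j)
      = ∑ i, ∑ j, (r i j * Real.log (a i) + r i j * Real.log (b j)) := by
    refine Finset.sum_congr rfl fun i _ => Finset.sum_congr rfl fun j _ => ?_
    rcases eq_or_lt_of_le (hr0 i j) with h0 | h0
    · rw [← h0]; ring
    · have hai : a i ≠ 0 := fun hc => (ne_of_gt h0) (hra i hc j)
      have hbj : b j ≠ 0 := fun hc => (ne_of_gt h0) (hrb j hc i)
      rw [Real.log_mul hai hbj]; ring
  -- Klein inequality, summed
  have hMain : ∑ i, ∑ j, ∑ m, (w m i j * p m - w m i j * (a i * b j))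
      ≤ ∑ i, ∑ j, ∑ m, (w m i j * p m * Real.log (p m) - w m i j * p m * Real.log (a i * b j)) := by
    refine Finset.sum_le_sum fun i _ => Finset.sum_le_sum fun j _ => Finset.sum_le_sum fun m _ => ?_
    have hz : a i * b j = 0 → w m i j * p m = 0 := by
      intro hq
      rcases mul_eq_zero.mp hq with hq | hq
      · rw [mul_comm]; exact hpw0 i j (hra i hq j) m
      · rw [mul_comm]; exact hpw0 i j (hrb j hq i) m
    have := Subadd.klein (hw0 m i j) (hp0 m) (mul_nonneg (ha0 i) (hb0 j)) hz
    nlinarith [this]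
  -- evaluate the four sums
  have swap3 : ∀ f : Fin dA → Fin dB → (Fin dA × Fin dB) → ℝ,
      ∑ i, ∑ j, ∑ m, f i j m = ∑ m, ∑ i, ∑ j, f i j m := by
    intro f
    refine Eq.trans (Finset.sum_congr rfl fun i _ => Finset.sum_comm) ?_
    exact Finset.sum_comm
  have hL1 : ∑ i, ∑ j, ∑ m, w m i j * p m = 1 := by
    rw [swap3]
    calc ∑ m, ∑ i, ∑ j, w m i j * p m = ∑ m, p m * ∑ i, ∑ j, w m i j := by
          refine Finset.sum_congr rfl fun m _ => ?_
          rw [Finset.mul_sum]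
          refine Finset.sum_congr rfl fun i _ => ?_
          rw [Finset.mul_sum]
          exact Finset.sum_congr rfl fun j _ => by ring
      _ = ∑ m, p m := by
          refine Finset.sum_congr rfl fun m _ => ?_
          rw [hwB m, mul_one]
      _ = 1 := hsp
  have hL2 : ∑ i, ∑ j, ∑ m, w m i j * (a i * b j) = 1 := by
    calc ∑ i, ∑ j, ∑ m, w m i j * (a i * b j)
        = ∑ i, ∑ j, (a i * b j) * ∑ m, w m i j := by
          refine Finset.sum_congr rfl fun i _ => Finset.sum_congr rfl fun j _ => ?_
          rw [Finset.mul_sum]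
          exact Finset.sum_congr rfl fun m _ => by ring
      _ = ∑ i, ∑ j, a i * b j := by
          refine Finset.sum_congr rfl fun i _ => Finset.sum_congr rfl fun j _ => ?_
          rw [hwA i j, mul_one]
      _ = (∑ i, a i) * (∑ j, b j) := by rw [Finset.sum_mul_sum]
      _ = 1 := by rw [hsa, hsb, mul_one]
  have hR1 : ∑ i, ∑ j, ∑ m, w m i j * p m * Real.log (p m) = ∑ m, p m * Real.log (p m) := by
    rw [swap3]
    calc ∑ m, ∑ i, ∑ j, w m i j * p m * Real.log (p m)
        = ∑ m, (p m * Real.log (p m)) * ∑ i, ∑ j, w m i j := by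
          refine Finset.sum_congr rfl fun m _ => ?_
          rw [Finset.mul_sum]
          refine Finset.sum_congr rfl fun i _ => ?_
          rw [Finset.mul_sum]
          exact Finset.sum_congr rfl fun j _ => by ring
      _ = ∑ m, p m * Real.log (p m) := by
          refine Finset.sum_congr rfl fun m _ => ?_
          rw [hwB m, mul_one]
  have hR2 : ∑ i, ∑ j, ∑ m, w m i j * p m * Real.log (a i * b j)
      = ∑ i, ∑ j, r i j * Real.log (a i * b j) := by
    refine Finset.sum_congr rfl fun i _ => Finset.sum_congr rfl fun j _ => ?_
    simp only [hrdef]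
    rw [Finset.sum_mul]
    exact Finset.sum_congr rfl fun m _ => by ring
  -- put everything together
  have hexp : ∑ i, ∑ j, ∑ m, (w m i j * p m - w m i j * (a i * b j))
      = (∑ i, ∑ j, ∑ m, w m i j * p m) - ∑ i, ∑ j, ∑ m, w m i j * (a i * b j) := by
    simp [Finset.sum_sub_distrib]
  have hexp2 : ∑ i, ∑ j, ∑ m, (w m i j * p m * Real.log (p m) - w m i j * p m * Real.log (a i * b j))
      = (∑ i, ∑ j, ∑ m, w m i j * p m * Real.log (p m))
        - ∑ i, ∑ j, ∑ m, w m i j * p m * Real.log (a i * b j) := by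
    simp [Finset.sum_sub_distrib]
  rw [hexp, hexp2, hL1, hL2, hR1, hR2] at hMain
  have hfinal : ∑ i, ∑ j, r i j * Real.log (a i * b j) ≤ ∑ m, p m * Real.log (p m) := by linarith
  rw [hTq] at hfinal
  rw [hT1, hT2]
  simp only [Finset.sum_add_distrib] at hfinal ⊢
  linarith
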